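/- ∫₀¹ ∫₀¹ m(s) · g(s,t)² · m(t) ds dt = 13/25200. Equivalently, (1/30)^{−2} · ∫₀¹∫₀¹ m(s) g(s,t)² m(t) ds dt = 13/28, which is the constant D_ols appearing in the limit covariance kernel for the ordinary least squares version of the test. -/

import Mathlib

/-- `m(s) = s(1-s)`. -/
noncomputable def m (s : ℝ) : ℝ := s * (1 - s)

/-- `g(s,t) = min(s,t)·(1 - max(s,t))`. -/
noncomputable def g (s t : ℝ) : ℝ := min s t * (1 - max s t)

/-- Integral of a generic polynomial of degree ≤ 9. -/
lemma poly_int (c0 c1 c2 c3 c4 c5 c6 c7 c8 c9 a b : ℝ) :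
    ∫ x in a..b, (c0 + c1*x + c2*x^2 + c3*x^3 + c4*x^4 + c5*x^5 + c6*x^6 + c7*x^7
      + c8*x^8 + c9*x^9)
    = (c0*b^1 + c1/2*b^2 + c2/3*b^3 + c3/4*b^4 + c4/5*b^5 + c5/6*b^6 + c6/7*b^7
        + c7/8*b^8 + c8/9*b^9 + c9/10*b^10)
      - (c0*a^1 + c1/2*a^2 + c2/3*a^3 + c3/4*a^4 + c4/5*a^5 + c5/6*a^6 + c6/7*a^7
        + c7/8*a^8 + c8/9*a^9 + c9/10*a^10) := by
  apply intervalIntegral.integral_eq_sub_of_hasDerivAt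
  · intro x _
    have H := (((((((((((hasDerivAt_pow 1 x).const_mul c0).add
      ((hasDerivAt_pow 2 x).const_mul (c1/2))).add
      ((hasDerivAt_pow 3 x).const_mul (c2/3))).add
      ((hasDerivAt_pow 4 x).const_mul (c3/4))).add
      ((hasDerivAt_pow 5 x).const_mul (c4/5))).add
      ((hasDerivAt_pow 6 x).const_mul (c5/6))).add
      ((hasDerivAt_pow 7 x).const_mul (c6/7))).add
      ((hasDerivAt_pow 8 x).const_mul (c7/8))).add
      ((hasDerivAt_pow 9 x).const_mul (c8/9))).add
      ((hasDerivAt_pow 10 x).const_mul (c9/10)))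
    convert H using 1
    · funext y
      simp only [Pi.add_apply]
    push_cast
    ring
  · apply Continuous.intervalIntegrable
    fun_prop

lemma integrable_piece (s a b : ℝ) :
    IntervalIntegrable (fun t => m s * g s t ^ 2 * m t) MeasureTheory.volume a b := by
  apply Continuous.intervalIntegrable
  unfold m g
  fun_prop

/-- Inner integral as an explicit polynomial in `s`. -/
lemma inner_int (s : ℝ) (hs0 : 0 ≤ s) (hs1 : s ≤ 1) :
    ∫ t in (0:ℝ)..1, m s * g s t ^ 2 * m t
    = 1/20*s^3 + (-1/20)*s^4 + (-1/4)*s^5 + (11/20)*s^6 + (-2/5)*s^7 + (1/10)*s^8 := by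
  have hsplit := intervalIntegral.integral_add_adjacent_intervals
    (integrable_piece s 0 s) (integrable_piece s s 1)
  rw [← hsplit]
  have h1 : ∫ t in (0:ℝ)..s, m s * g s t ^ 2 * m t
      = ∫ t in (0:ℝ)..s, ((0:ℝ) + 0*t + 0*t^2 + (m s * (1-s)^2)*t^3 + (-(m s * (1-s)^2))*t^4
        + 0*t^5 + 0*t^6 + 0*t^7 + 0*t^8 + 0*t^9) := by
    apply intervalIntegral.integral_congr
    intro t ht
    rw [Set.uIcc_of_le hs0] at ht
    have hts : t ≤ s := ht.2
    simp only [m, g, min_eq_right hts, max_eq_left hts]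
    ring
  have h2 : ∫ t in s..(1:ℝ), m s * g s t ^ 2 * m t
      = ∫ t in s..(1:ℝ), ((0:ℝ) + (m s * s^2)*t + (-(3*(m s * s^2)))*t^2
        + (3*(m s * s^2))*t^3 + (-(m s * s^2))*t^4
        + 0*t^5 + 0*t^6 + 0*t^7 + 0*t^8 + 0*t^9) := by
    apply intervalIntegral.integral_congr
    intro t ht
    rw [Set.uIcc_of_le hs1] at ht
    have hst : s ≤ t := ht.1
    simp only [m, g, min_eq_left hst, max_eq_right hst]
    ring
  rw [h1, h2, poly_int, poly_int]
  unfold m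
  ring

/-- `∫₀¹∫₀¹ m(s) g(s,t)² m(t) ds dt = 13/25200`. -/
theorem stmt3 :
    ∫ s in (0 : ℝ)..1, ∫ t in (0 : ℝ)..1, m s * (g s t) ^ 2 * m t = 13 / 25200 := by
  have h : ∫ s in (0 : ℝ)..1, ∫ t in (0 : ℝ)..1, m s * (g s t) ^ 2 * m t
      = ∫ s in (0 : ℝ)..1, ((0:ℝ) + 0*s + 0*s^2 + (1/20)*s^3 + (-1/20)*s^4 + (-1/4)*s^5
        + (11/20)*s^6 + (-2/5)*s^7 + (1/10)*s^8 + 0*s^9) := by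
    apply intervalIntegral.integral_congr
    intro s hs
    rw [Set.uIcc_of_le (by norm_num : (0:ℝ) ≤ 1)] at hs
    beta_reduce
    rw [inner_int s hs.1 hs.2]
    ring
  rw [h, poly_int]
  norm_num
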